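/- Let D be a type with a binary relation ~ (the neighboring relation), let ε₁, ε₂, δ₁, δ₂ ≥ 0, and let M₁ : D → PMF A and M₂ : D → PMF B be mechanisms such that M₁ satisfies (ε₁,δ₁)-differential privacy and M₂ satisfies (ε₂,δ₂)-differential privacy with respect to ~. Then the mechanism that releases both outputs independently, J(d) = (M₁ d).bind (fun a => (M₂ d).map (Prod.mk a)), satisfies (ε₁+ε₂, δ₁+δ₂)-differential privacy: for all d₁ ~ d₂ and every set S ⊆ A × B, Pr[J(d₁) ∈ S] ≤ e^{ε₁+ε₂} · Pr[J(d₂) ∈ S] + δ₁ + δ₂. -/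

import Mathlib

open ENNReal

/-- Outer measure of a bind as a weighted sum. -/
lemma pmf_bind_toOuterMeasure {A C : Type*} (p : PMF A) (f : A → PMF C) (S : Set C) :
    (p.bind f).toOuterMeasure S = ∑' a, p a * (f a).toOuterMeasure S := by
  rw [PMF.toOuterMeasure_apply]
  have : ∀ c, S.indicator (p.bind f) c = ∑' a, p a * S.indicator (f a) c := by
    intro c
    by_cases hc : c ∈ S
    · simp [Set.indicator_of_mem hc, PMF.bind_apply]
    · simp [Set.indicator_of_notMem hc]
  simp_rw [this]
  rw [ENNReal.tsum_comm]
  congr 1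
  funext a
  rw [ENNReal.tsum_mul_left, PMF.toOuterMeasure_apply]

/-- Key lemma: set-level DP bound extends to expectations of [0,1]-valued functions. -/
lemma dp_expectation {A : Type*} (μ₁ μ₂ : PMF A) (c δ : ℝ≥0∞) (hc : c ≠ ∞)
    (h : ∀ S : Set A, μ₁.toOuterMeasure S ≤ c * μ₂.toOuterMeasure S + δ)
    (f : A → ℝ≥0∞) (hf : ∀ a, f a ≤ 1) :
    ∑' a, μ₁ a * f a ≤ c * (∑' a, μ₂ a * f a) + δ := by
  set T : Set A := {a | c * μ₂ a < μ₁ a} with hT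
  -- pointwise bound
  have hpt : ∀ a, μ₁ a * f a ≤ (μ₁ a - c * μ₂ a) + c * (μ₂ a * f a) := by
    intro a
    calc μ₁ a * f a ≤ ((μ₁ a - c * μ₂ a) + c * μ₂ a) * f a := by
          exact mul_le_mul_left le_tsub_add _
      _ = (μ₁ a - c * μ₂ a) * f a + c * μ₂ a * f a := by ring
      _ ≤ (μ₁ a - c * μ₂ a) * 1 + c * (μ₂ a * f a) := by
          rw [mul_assoc]
          exact add_le_add (mul_le_mul_right (hf a) _) le_rfl
      _ = (μ₁ a - c * μ₂ a) + c * (μ₂ a * f a) := by rw [mul_one]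
  -- sum of truncated excess is at most δ
  have hind : ∀ a, μ₁ a - c * μ₂ a
      = T.indicator (fun a => μ₁ a) a - T.indicator (fun a => c * μ₂ a) a := by
    intro a
    by_cases ha : a ∈ T
    · simp [Set.indicator_of_mem ha]
    · have hle : μ₁ a ≤ c * μ₂ a := not_lt.mp ha
      simp [Set.indicator_of_notMem ha, tsub_eq_zero_of_le hle]
  have hgle : ∀ a, T.indicator (fun a => c * μ₂ a) a ≤ T.indicator (fun a => μ₁ a) a := by
    intro a
    by_cases ha : a ∈ T
    · simpa [Set.indicator_of_mem ha] using le_of_lt ha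
    · simp [Set.indicator_of_notMem ha]
  have hgfin : (∑' a, T.indicator (fun a => c * μ₂ a) a) ≠ ∞ := by
    refine ne_top_of_le_ne_top ?_ (ENNReal.tsum_le_tsum fun a => Set.indicator_le_self _ _ a)
    rw [ENNReal.tsum_mul_left]
    exact ENNReal.mul_ne_top hc (by simp [μ₂.tsum_coe])
  have hsum1 : (∑' a, T.indicator (fun a => μ₁ a) a) = μ₁.toOuterMeasure T :=
    (PMF.toOuterMeasure_apply μ₁ T).symm
  have hsum2 : (∑' a, T.indicator (fun a => c * μ₂ a) a) = c * μ₂.toOuterMeasure T := by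
    rw [PMF.toOuterMeasure_apply, ← ENNReal.tsum_mul_left]
    congr 1; funext a
    by_cases ha : a ∈ T <;> simp [Set.indicator, ha]
  have hexc : (∑' a, (μ₁ a - c * μ₂ a)) ≤ δ := by
    have key : (∑' a, (μ₁ a - c * μ₂ a)) + (∑' a, T.indicator (fun a => c * μ₂ a) a)
        = ∑' a, T.indicator (fun a => μ₁ a) a := by
      rw [← ENNReal.tsum_add]
      congr 1; funext a
      rw [hind a, tsub_add_cancel_of_le (hgle a)]
    have hle : (∑' a, (μ₁ a - c * μ₂ a)) + (∑' a, T.indicator (fun a => c * μ₂ a) a)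
        ≤ δ + (∑' a, T.indicator (fun a => c * μ₂ a) a) := by
      rw [key, hsum1, hsum2]
      calc μ₁.toOuterMeasure T ≤ c * μ₂.toOuterMeasure T + δ := h T
        _ = δ + c * μ₂.toOuterMeasure T := by ring
    exact (ENNReal.add_le_add_iff_right hgfin).mp hle
  calc ∑' a, μ₁ a * f a
      ≤ ∑' a, ((μ₁ a - c * μ₂ a) + c * (μ₂ a * f a)) := ENNReal.tsum_le_tsum hpt
    _ = (∑' a, (μ₁ a - c * μ₂ a)) + c * ∑' a, μ₂ a * f a := by
        rw [ENNReal.tsum_add, ENNReal.tsum_mul_left]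
    _ ≤ δ + c * ∑' a, μ₂ a * f a := add_le_add_left hexc _
    _ = c * (∑' a, μ₂ a * f a) + δ := by ring

/-- Sequential composition of two (ε,δ)-differentially private mechanisms. -/
theorem seq_composition_two
    {D A B : Type*} (neighbor : D → D → Prop)
    (ε₁ ε₂ δ₁ δ₂ : ℝ) (hε₁ : 0 ≤ ε₁) (hε₂ : 0 ≤ ε₂) (hδ₁ : 0 ≤ δ₁) (hδ₂ : 0 ≤ δ₂)
    (M₁ : D → PMF A) (M₂ : D → PMF B)
    (h₁ : ∀ d₁ d₂, neighbor d₁ d₂ → ∀ S : Set A,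
      (M₁ d₁).toOuterMeasure S ≤
        ENNReal.ofReal (Real.exp ε₁) * (M₁ d₂).toOuterMeasure S + ENNReal.ofReal δ₁)
    (h₂ : ∀ d₁ d₂, neighbor d₁ d₂ → ∀ S : Set B,
      (M₂ d₁).toOuterMeasure S ≤
        ENNReal.ofReal (Real.exp ε₂) * (M₂ d₂).toOuterMeasure S + ENNReal.ofReal δ₂) :
    ∀ d₁ d₂, neighbor d₁ d₂ → ∀ S : Set (A × B),
      ((M₁ d₁).bind (fun a => (M₂ d₁).map (Prod.mk a))).toOuterMeasure S ≤
        ENNReal.ofReal (Real.exp (ε₁ + ε₂)) *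
          ((M₁ d₂).bind (fun a => (M₂ d₂).map (Prod.mk a))).toOuterMeasure S +
        (ENNReal.ofReal δ₁ + ENNReal.ofReal δ₂) := by
  intro d₁ d₂ hd S
  set c₁ := ENNReal.ofReal (Real.exp ε₁)
  set c₂ := ENNReal.ofReal (Real.exp ε₂)
  set δ₁' := ENNReal.ofReal δ₁
  set δ₂' := ENNReal.ofReal δ₂
  -- slice probabilities
  set q₁ : A → ℝ≥0∞ := fun a => (M₂ d₁).toOuterMeasure (Prod.mk a ⁻¹' S) with hq₁
  set q₂ : A → ℝ≥0∞ := fun a => (M₂ d₂).toOuterMeasure (Prod.mk a ⁻¹' S) with hq₂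
  have hJ₁ : ((M₁ d₁).bind (fun a => (M₂ d₁).map (Prod.mk a))).toOuterMeasure S
      = ∑' a, (M₁ d₁) a * q₁ a := by
    rw [pmf_bind_toOuterMeasure]
    simp_rw [PMF.toOuterMeasure_map_apply]
    rfl
  have hJ₂ : ((M₁ d₂).bind (fun a => (M₂ d₂).map (Prod.mk a))).toOuterMeasure S
      = ∑' a, (M₁ d₂) a * q₂ a := by
    rw [pmf_bind_toOuterMeasure]
    simp_rw [PMF.toOuterMeasure_map_apply]
    rfl
  -- truncated inner probability
  set g : A → ℝ≥0∞ := fun a => q₁ a - δ₂' with hg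
  have hq₁le : ∀ a, q₁ a ≤ g a + δ₂' := fun a => le_tsub_add
  have hq1le1 : ∀ a, q₁ a ≤ 1 := by
    intro a
    show (M₂ d₁).toOuterMeasure (Prod.mk a ⁻¹' S) ≤ 1
    rw [PMF.toOuterMeasure_apply]
    exact le_trans (ENNReal.tsum_le_tsum fun b => Set.indicator_le_self _ _ b)
      (le_of_eq (M₂ d₁).tsum_coe)
  have hgle1 : ∀ a, g a ≤ 1 := fun a => le_trans tsub_le_self (hq1le1 a)
  have hgle : ∀ a, g a ≤ c₂ * q₂ a := by
    intro a
    exact tsub_le_iff_right.mpr (h₂ d₁ d₂ hd _)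
  have hc₁ : c₁ ≠ ∞ := ENNReal.ofReal_ne_top
  have step1 : (∑' a, (M₁ d₁) a * q₁ a) ≤ (∑' a, (M₁ d₁) a * g a) + δ₂' := by
    calc (∑' a, (M₁ d₁) a * q₁ a)
        ≤ ∑' a, ((M₁ d₁) a * g a + (M₁ d₁) a * δ₂') := by
          refine ENNReal.tsum_le_tsum fun a => ?_
          rw [← mul_add]
          exact mul_le_mul_right (hq₁le a) _
      _ = (∑' a, (M₁ d₁) a * g a) + (∑' a, (M₁ d₁) a) * δ₂' := by
          rw [ENNReal.tsum_add, ENNReal.tsum_mul_right]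
      _ = (∑' a, (M₁ d₁) a * g a) + δ₂' := by rw [(M₁ d₁).tsum_coe, one_mul]
  have step2 : (∑' a, (M₁ d₁) a * g a) ≤ c₁ * (∑' a, (M₁ d₂) a * g a) + δ₁' :=
    dp_expectation (M₁ d₁) (M₁ d₂) c₁ δ₁' hc₁ (h₁ d₁ d₂ hd) g hgle1
  have step3 : (∑' a, (M₁ d₂) a * g a) ≤ c₂ * ∑' a, (M₁ d₂) a * q₂ a := by
    rw [← ENNReal.tsum_mul_left]
    refine ENNReal.tsum_le_tsum fun a => ?_
    calc (M₁ d₂) a * g a ≤ (M₁ d₂) a * (c₂ * q₂ a) := mul_le_mul_right (hgle a) _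
      _ = c₂ * ((M₁ d₂) a * q₂ a) := by ring
  have hcc : c₁ * c₂ = ENNReal.ofReal (Real.exp (ε₁ + ε₂)) := by
    rw [Real.exp_add, ENNReal.ofReal_mul (le_of_lt (Real.exp_pos ε₁))]
  calc ((M₁ d₁).bind (fun a => (M₂ d₁).map (Prod.mk a))).toOuterMeasure S
      = ∑' a, (M₁ d₁) a * q₁ a := hJ₁
    _ ≤ (∑' a, (M₁ d₁) a * g a) + δ₂' := step1
    _ ≤ (c₁ * (∑' a, (M₁ d₂) a * g a) + δ₁') + δ₂' := add_le_add_left step2 _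
    _ ≤ (c₁ * (c₂ * ∑' a, (M₁ d₂) a * q₂ a) + δ₁') + δ₂' :=
        add_le_add_left (add_le_add_left (mul_le_mul_right step3 _) _) _
    _ = ENNReal.ofReal (Real.exp (ε₁ + ε₂)) *
          ((M₁ d₂).bind (fun a => (M₂ d₂).map (Prod.mk a))).toOuterMeasure S + (δ₁' + δ₂') := by
        rw [hJ₂, ← mul_assoc, hcc, add_assoc]
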